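/- Let Ψ be an N-function, a ∈ W with Fourier coefficients {a_k}, and ψ = {ψ_k}_{k=0}^∞ a nondecreasing positive weight sequence with Σ_{k≥0} Ψ(|a_k|ψ_k) < ∞. Then for every n ∈ ℕ and j ∈ {0,…,n}, the operator Q_n T(a) Δ_j on ℓ^Ψ(ℤ_+) satisfies ‖Q_n T(a) Δ_j‖ ≤ (Ψ^{-1}(1)/ψ_{n−j+1}) · ‖{(a − a^{(n−j)})_k}_{k≥0}‖_{ℓ^Ψ_ψ(ℤ_+)}, where Q_n = I − P_n, Δ_j = P_j − P_{j−1} (Δ_0 = P_0), and a^{(m)}(t) = Σ_{|k|≤m} a_k t^k. -/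

import Mathlib

def IsNFunction (Φ : ℝ → ℝ) : Prop :=
  ConvexOn ℝ (Set.Ici 0) Φ ∧ Φ 0 = 0 ∧ (∀ x : ℝ, 0 < x → 0 < Φ x) ∧
  Filter.Tendsto (fun x => Φ x / x) (nhdsWithin 0 (Set.Ioi 0)) (nhds 0) ∧
  Filter.Tendsto (fun x => Φ x / x) Filter.atTop Filter.atTop

/-- Membership in the weighted Orlicz sequence space `ℓ^Ψ_ψ(ℤ₊)`. -/
def MemOrliczW (Ψ : ℝ → ℝ) (ψ : ℕ → ℝ) (c : ℕ → ℂ) : Prop :=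
  ∃ l : ℝ, 0 < l ∧ Summable (fun k => Ψ (‖c k‖ * ψ k / l)) ∧ ∑' k, Ψ (‖c k‖ * ψ k / l) ≤ 1

/-- The weighted Luxemburg norm on `ℓ^Ψ_ψ(ℤ₊)`. -/
noncomputable def luxNormW (Ψ : ℝ → ℝ) (ψ : ℕ → ℝ) (c : ℕ → ℂ) : ℝ :=
  sInf {l : ℝ | 0 < l ∧ Summable (fun k => Ψ (‖c k‖ * ψ k / l)) ∧
    ∑' k, Ψ (‖c k‖ * ψ k / l) ≤ 1}

/-- `Ψ⁻¹(1)`, the generalized inverse of the N-function `Ψ` at 1. -/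
noncomputable def invAtOne (Ψ : ℝ → ℝ) : ℝ := sSup {x : ℝ | 0 ≤ x ∧ Ψ x ≤ 1}

/-- `Q_n T(a) Δ_j` applied to `c`: it equals `a_{k-j} c_j` in coordinate `k` for `k > n`,
and `0` otherwise. -/
noncomputable def QTDelta (a : ℤ → ℂ) (n j : ℕ) (c : ℕ → ℂ) : ℕ → ℂ :=
  fun k => if n < k then a ((k : ℤ) - (j : ℤ)) * c j else 0

lemma psi_nonneg {Ψ : ℝ → ℝ} (hΨ : IsNFunction Ψ) {x : ℝ} (hx : 0 ≤ x) : 0 ≤ Ψ x := by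
  rcases hx.eq_or_lt with h | h
  · simp [← h, hΨ.2.1]
  · exact (hΨ.2.2.1 x h).le

lemma psi_mono {Ψ : ℝ → ℝ} (hΨ : IsNFunction Ψ) {x y : ℝ} (hx : 0 ≤ x) (hxy : x ≤ y) :
    Ψ x ≤ Ψ y := by
  rcases (hx.trans hxy).eq_or_lt with h | hy
  · have : x = 0 := le_antisymm (hxy.trans h.symm.le) hx
    rw [this, ← h]
  · have hb : (0:ℝ) ≤ x / y := div_nonneg hx hy.le
    have hb1 : x / y ≤ 1 := (div_le_one hy).2 hxy
    have ha : (0:ℝ) ≤ 1 - x / y := by linarith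
    have hab : (1 - x / y) + x / y = 1 := by ring
    have h1 := hΨ.1.2 (Set.mem_Ici.2 (le_refl (0:ℝ))) (Set.mem_Ici.2 (hx.trans hxy)) ha hb hab
    have hxx : (1 - x / y) • (0 : ℝ) + (x / y) • y = x := by
      rw [smul_zero, zero_add, smul_eq_mul, div_mul_cancel₀ x hy.ne']
    rw [hxx, hΨ.2.1] at h1
    have h2 : (x / y) * Ψ y ≤ Ψ y := by
      nlinarith [psi_nonneg hΨ (hx.trans hxy)]
    calc Ψ x ≤ (1 - x/y) • (0:ℝ) + (x/y) • Ψ y := h1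
      _ = (x / y) * Ψ y := by simp [smul_eq_mul]
      _ ≤ Ψ y := h2

lemma psi_div {Ψ : ℝ → ℝ} (hΨ : IsNFunction Ψ) {x l : ℝ} (hx : 0 ≤ x) (hl : 1 ≤ l) :
    Ψ (x / l) ≤ Ψ x / l := by
  have hl0 : 0 < l := lt_of_lt_of_le one_pos hl
  have hb : (0:ℝ) ≤ 1 / l := by positivity
  have hb1 : 1 / l ≤ 1 := by rw [div_le_one hl0]; exact hl
  have ha : (0:ℝ) ≤ 1 - 1 / l := by linarith
  have hab : (1 - 1 / l) + 1 / l = 1 := by ring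
  have h1 := hΨ.1.2 (Set.mem_Ici.2 (le_refl (0:ℝ))) (Set.mem_Ici.2 hx) ha hb hab
  have hxx : (1 - 1 / l) • (0 : ℝ) + (1 / l) • x = x / l := by
    rw [smul_zero, zero_add, smul_eq_mul, one_div, inv_mul_eq_div]
  rw [hxx, hΨ.2.1] at h1
  calc Ψ (x / l) ≤ (1 - 1/l) • (0:ℝ) + (1/l) • Ψ x := h1
    _ = Ψ x / l := by simp [smul_eq_mul]; ring

lemma invAtOne_bdd {Ψ : ℝ → ℝ} (hΨ : IsNFunction Ψ) :
    BddAbove {x : ℝ | 0 ≤ x ∧ Ψ x ≤ 1} := by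
  obtain ⟨x0, hx0⟩ := (hΨ.2.2.2.2.eventually_ge_atTop 2).exists_forall_of_atTop
  refine ⟨max x0 1, fun x hx => ?_⟩
  by_contra hgt
  push_neg at hgt
  have hx1 : (1:ℝ) < x := lt_of_le_of_lt (le_max_right x0 1) hgt
  have h2 : 2 ≤ Ψ x / x := hx0 x (le_of_lt (lt_of_le_of_lt (le_max_left x0 1) hgt))
  have h3 : 2 * x ≤ Ψ x := by
    have := (le_div_iff₀ (lt_trans one_pos hx1)).1 h2; linarith
  nlinarith [hx.2]

lemma invAtOne_pos {Ψ : ℝ → ℝ} (hΨ : IsNFunction Ψ) : 0 < invAtOne Ψ := by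
  have h1 : ∀ᶠ x in nhdsWithin 0 (Set.Ioi 0), Ψ x / x < 1 :=
    hΨ.2.2.2.1.eventually (gt_mem_nhds one_pos)
  have h3 : ∀ᶠ x : ℝ in nhdsWithin 0 (Set.Ioi 0), x ∈ Set.Ioi 0 :=
    eventually_mem_nhdsWithin
  obtain ⟨x, hx1, hx3⟩ := (h1.and h3).exists
  have hx0 : (0:ℝ) < x := hx3
  rcases le_or_gt x 1 with hle | hlt
  · have hΨx : Ψ x ≤ 1 := by
      have := (div_lt_one hx0).1 hx1
      linarith
    calc (0:ℝ) < x := hx0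
      _ ≤ invAtOne Ψ := le_csSup (invAtOne_bdd hΨ) ⟨hx0.le, hΨx⟩
  ·
    -- restrict the eventually set to Ioo 0 1
    have h2 : ∀ᶠ y : ℝ in nhdsWithin 0 (Set.Ioi 0), y < 1 :=
      eventually_nhdsWithin_of_eventually_nhds (eventually_lt_nhds one_pos)
    obtain ⟨y, hy1, hy2, hy3⟩ := (h1.and (h2.and h3)).exists
    have hy0 : (0:ℝ) < y := hy3
    have hΨy : Ψ y ≤ 1 := by
      have := (div_lt_one hy0).1 hy1
      linarith
    calc (0:ℝ) < y := hy0
      _ ≤ invAtOne Ψ := le_csSup (invAtOne_bdd hΨ) ⟨hy0.le, hΨy⟩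

lemma mem_le_invAtOne {Ψ : ℝ → ℝ} (hΨ : IsNFunction Ψ) {t : ℝ} (ht : 0 ≤ t) (h1 : Ψ t ≤ 1) :
    t ≤ invAtOne Ψ := le_csSup (invAtOne_bdd hΨ) ⟨ht, h1⟩

lemma le_mul_csInf {x C : ℝ} {A : Set ℝ} (hC : 0 ≤ C) (hA : A.Nonempty)
    (h : ∀ l ∈ A, x ≤ C * l) : x ≤ C * sInf A := by
  rcases hC.eq_or_lt with h0 | h0
  · obtain ⟨l, hl⟩ := hA
    have hx := h l hl
    rw [← h0] at hx ⊢
    simpa using hx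
  · have hx : x / C ≤ sInf A := le_csInf hA fun l hl => (div_le_iff₀' h0).2 (h l hl)
    calc x = C * (x / C) := by field_simp
      _ ≤ C * sInf A := by nlinarith

theorem stmt_15 (Ψ : ℝ → ℝ) (hΨ : IsNFunction Ψ)
    (a : ℤ → ℂ) (haW : Summable fun k : ℤ => ‖a k‖)
    (ψ : ℕ → ℝ) (hψpos : ∀ k, 0 < ψ k) (hψmono : Monotone ψ)
    (haΨ : Summable fun k : ℕ => Ψ (‖a (k : ℤ)‖ * ψ k)) :
    ∀ n : ℕ, 1 ≤ n → ∀ j : ℕ, j ≤ n → ∀ c : ℕ → ℂ, MemOrliczW Ψ (fun _ => 1) c →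
      MemOrliczW Ψ (fun _ => 1) (QTDelta a n j c) ∧
      luxNormW Ψ (fun _ => 1) (QTDelta a n j c) ≤
        invAtOne Ψ / ψ (n - j + 1) *
          luxNormW Ψ ψ (fun k => if k ≤ n - j then 0 else a (k : ℤ)) *
          luxNormW Ψ (fun _ => 1) c := by
  intro n hn j hj c hc
  set b : ℕ → ℂ := fun k => if k ≤ n - j then 0 else a (k : ℤ) with hbdef
  set κ := invAtOne Ψ with hκdef
  have hκpos : 0 < κ := invAtOne_pos hΨ
  have hψ1 : 0 < ψ (n - j + 1) := hψpos _
  -- the three admissible sets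
  set Ab : Set ℝ := {l | 0 < l ∧ Summable (fun k => Ψ (‖b k‖ * ψ k / l)) ∧
    ∑' k, Ψ (‖b k‖ * ψ k / l) ≤ 1} with hAb
  set Ac : Set ℝ := {l | 0 < l ∧ Summable (fun k => Ψ (‖c k‖ * 1 / l)) ∧
    ∑' k, Ψ (‖c k‖ * 1 / l) ≤ 1} with hAc
  set Ad : Set ℝ := {l | 0 < l ∧ Summable (fun k => Ψ (‖QTDelta a n j c k‖ * 1 / l)) ∧
    ∑' k, Ψ (‖QTDelta a n j c k‖ * 1 / l) ≤ 1} with hAd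
  -- nonemptiness of Ab
  have hS0 : 0 ≤ ∑' k : ℕ, Ψ (‖a (k:ℤ)‖ * ψ k) :=
    tsum_nonneg fun k => psi_nonneg hΨ (mul_nonneg (norm_nonneg _) (hψpos k).le)
  set S := ∑' k : ℕ, Ψ (‖a (k:ℤ)‖ * ψ k) with hSdef
  have hS1 : (1:ℝ) ≤ S + 1 := by linarith
  have hSpos : (0:ℝ) < S + 1 := by linarith
  have hterm : ∀ k, Ψ (‖b k‖ * ψ k / (S+1)) ≤ Ψ (‖a (k:ℤ)‖ * ψ k) / (S+1) := by
    intro k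
    have h1 : ‖b k‖ ≤ ‖a (k:ℤ)‖ := by
      by_cases h : k ≤ n - j <;> simp [hbdef, h]
    have h2 : ‖b k‖ * ψ k / (S+1) ≤ ‖a (k:ℤ)‖ * ψ k / (S+1) := by
      gcongr
      exact (hψpos k).le
    exact (psi_mono hΨ (div_nonneg (mul_nonneg (norm_nonneg _) (hψpos k).le) hSpos.le) h2).trans
      (psi_div hΨ (mul_nonneg (norm_nonneg _) (hψpos k).le) hS1)
  have hbsummable : Summable (fun k => Ψ (‖b k‖ * ψ k / (S+1))) :=
    Summable.of_nonneg_of_le (fun k => psi_nonneg hΨ (div_nonneg (mul_nonneg (norm_nonneg _) (hψpos k).le) hSpos.le)) hterm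
      (haΨ.div_const (S+1))
  have hbsum : ∑' k, Ψ (‖b k‖ * ψ k / (S+1)) ≤ 1 := by
    have h1 := Summable.tsum_le_tsum hterm hbsummable (haΨ.div_const (S+1))
    rw [tsum_div_const] at h1
    refine h1.trans ?_
    rw [div_le_one hSpos]; linarith
  have hAb_ne : Ab.Nonempty := ⟨S + 1, hSpos, hbsummable, hbsum⟩
  obtain ⟨lc0, hlc0, hlc0s, hlc0sum⟩ := hc
  have hAc_ne : Ac.Nonempty := ⟨lc0, hlc0, hlc0s, hlc0sum⟩
  -- the key membership statement
  have key : ∀ lb ∈ Ab, ∀ lc ∈ Ac, (κ * lb * lc / ψ (n - j + 1)) ∈ Ad := by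
    rintro lb ⟨hlb, hlbs, hlbsum⟩ lc ⟨hlc, hlcs, hlcsum⟩
    have hlampos : 0 < κ * lb * lc / ψ (n - j + 1) :=
      div_pos (mul_pos (mul_pos hκpos hlb) hlc) hψ1
    set lam := κ * lb * lc / ψ (n - j + 1) with hlam
    have hcj : ‖c j‖ ≤ κ * lc := by
      have h1 : Ψ (‖c j‖ * 1 / lc) ≤ 1 :=
        (Summable.le_tsum hlcs j (fun i _ => psi_nonneg hΨ (by
          rw [mul_one]; exact div_nonneg (norm_nonneg _) hlc.le))).trans hlcsum
      have h2 := mem_le_invAtOne hΨ (t := ‖c j‖ * 1 / lc) (by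
        rw [mul_one]; exact div_nonneg (norm_nonneg _) hlc.le) h1
      rw [mul_one, div_le_iff₀ hlc] at h2
      linarith
    set g : ℕ → ℝ := fun k => Ψ (‖b k‖ * ψ k / lb) with hg
    set f : ℕ → ℝ := fun k => Ψ (‖QTDelta a n j c k‖ * 1 / lam) with hf
    have hgnn : ∀ k, 0 ≤ g k := fun k => psi_nonneg hΨ
      (div_nonneg (mul_nonneg (norm_nonneg _) (hψpos k).le) hlb.le)
    have hfnn : ∀ k, 0 ≤ f k := fun k => psi_nonneg hΨ (by
      rw [mul_one]; exact div_nonneg (norm_nonneg _) hlampos.le)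
    have hfle : ∀ k, f k ≤ g (k - j) := by
      intro k
      by_cases hk : n < k
      · have hkj : n - j + 1 ≤ k - j := by omega
        have hkj2 : ¬ (k - j ≤ n - j) := by omega
        have hcast : (k : ℤ) - (j : ℤ) = ((k - j : ℕ) : ℤ) := by omega
        have hQ : ‖QTDelta a n j c k‖ = ‖a ((k - j : ℕ) : ℤ)‖ * ‖c j‖ := by
          simp [QTDelta, hk, hcast, norm_mul]
        have hbkj : b (k - j) = a ((k - j : ℕ) : ℤ) := by simp [hbdef, hkj2]
        have hψle : ψ (n - j + 1) ≤ ψ (k - j) := hψmono hkj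
        have hψkj : 0 < ψ (k - j) := hψpos _
        have harg : ‖QTDelta a n j c k‖ * 1 / lam ≤ ‖b (k - j)‖ * ψ (k - j) / lb := by
          rw [hQ, hbkj, mul_one, hlam]
          have hA : (0:ℝ) ≤ ‖a ((k - j : ℕ) : ℤ)‖ := norm_nonneg _
          rw [div_div_eq_mul_div, div_le_div_iff₀ (mul_pos (mul_pos hκpos hlb) hlc) hlb]
          nlinarith [mul_nonneg (sub_nonneg.2 hcj)
              (mul_nonneg (mul_nonneg hA hψ1.le) hlb.le),
            mul_nonneg (sub_nonneg.2 hψle)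
              (mul_nonneg (mul_nonneg hA hκpos.le) (mul_nonneg hlb.le hlc.le))]
        calc f k = Ψ (‖QTDelta a n j c k‖ * 1 / lam) := rfl
          _ ≤ Ψ (‖b (k - j)‖ * ψ (k - j) / lb) := psi_mono hΨ (by
              rw [mul_one]; exact div_nonneg (norm_nonneg _) hlampos.le) harg
          _ = g (k - j) := rfl
      · have hq : QTDelta a n j c k = 0 := by simp [QTDelta, hk]
        have : f k = 0 := by simp [hf, hq, hΨ.2.1]
        rw [this]; exact hgnn _
    have hgshift : Summable (fun t : ℕ => g (t - j)) :=
      (summable_nat_add_iff j).1 (by simpa using hlbs)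
    have hfs : Summable f := Summable.of_nonneg_of_le hfnn hfle hgshift
    have hzero : ∀ i ∈ Finset.range (n+1), f i = 0 := by
      intro i hi
      have hni : ¬ n < i := by simp at hi; omega
      have hq : QTDelta a n j c i = 0 := by simp [QTDelta, hni]
      simp [hf, hq, hΨ.2.1]
    have htail : ∑' k, f k = ∑' t, f (t + (n+1)) := by
      rw [← Summable.sum_add_tsum_nat_add (n+1) hfs, Finset.sum_eq_zero hzero, zero_add]
    have hinj : Function.Injective (fun t : ℕ => t + (n + 1 - j)) := by
      intro x y h; simpa using h
    have hcomp : ∀ t : ℕ, f (t + (n+1)) ≤ g (t + (n + 1 - j)) := by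
      intro t
      have h1 := hfle (t + (n+1))
      have he : t + (n+1) - j = t + (n + 1 - j) := by omega
      rwa [he] at h1
    have hle1 : ∑' t, f (t + (n+1)) ≤ ∑' k, g k :=
      Summable.tsum_le_tsum_of_inj _ hinj (fun c _ => hgnn c) hcomp
        ((summable_nat_add_iff (n+1)).2 hfs) hlbs
    exact ⟨hlampos, hfs, by rw [htail]; exact hle1.trans hlbsum⟩
  -- conclude
  have hcmem : lc0 ∈ Ac := ⟨hlc0, hlc0s, hlc0sum⟩
  have hSmem : (S + 1) ∈ Ab := ⟨hSpos, hbsummable, hbsum⟩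
  obtain ⟨h1, h2, h3⟩ := key (S+1) hSmem lc0 hcmem
  refine ⟨⟨κ * (S+1) * lc0 / ψ (n - j + 1), h1, h2, h3⟩, ?_⟩
  have hbdd : BddBelow Ad := ⟨0, fun l hl => hl.1.le⟩
  have hM0 : 0 ≤ sInf Ab := Real.sInf_nonneg (fun l hl => hl.1.le)
  have hN0 : 0 ≤ sInf Ac := Real.sInf_nonneg (fun l hl => hl.1.le)
  have hgoal : luxNormW Ψ (fun _ => 1) (QTDelta a n j c) = sInf Ad := rfl
  have hMb : luxNormW Ψ ψ b = sInf Ab := rfl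
  have hNc : luxNormW Ψ (fun _ => 1) c = sInf Ac := rfl
  rw [hgoal, hMb, hNc]
  have step1 : ∀ lc ∈ Ac, sInf Ad ≤ (κ * sInf Ab / ψ (n - j + 1)) * lc := by
    intro lc hlc
    have h4 : ∀ lb ∈ Ab, sInf Ad ≤ (κ * lc / ψ (n - j + 1)) * lb := by
      intro lb hlb
      have h5 := csInf_le hbdd (key lb hlb lc hlc)
      calc sInf Ad ≤ κ * lb * lc / ψ (n - j + 1) := h5
        _ = (κ * lc / ψ (n - j + 1)) * lb := by ring
    have h6 := le_mul_csInf (C := κ * lc / ψ (n - j + 1))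
      (div_nonneg (mul_nonneg hκpos.le hlc.1.le) hψ1.le) hAb_ne h4
    calc sInf Ad ≤ (κ * lc / ψ (n - j + 1)) * sInf Ab := h6
      _ = (κ * sInf Ab / ψ (n - j + 1)) * lc := by ring
  have step2 := le_mul_csInf (C := κ * sInf Ab / ψ (n - j + 1))
    (div_nonneg (mul_nonneg hκpos.le hM0) hψ1.le) hAc_ne step1
  calc sInf Ad ≤ (κ * sInf Ab / ψ (n - j + 1)) * sInf Ac := step2
    _ = κ / ψ (n - j + 1) * sInf Ab * sInf Ac := by ring
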